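/- The generator matrix of RM(r, m) is given by the rows of the m-fold tensor (Kronecker) power of the 2x2 matrix [[1,1],[0,1]] whose Hamming weight is at least 2^{m-r}; equivalently, RM(r, m) is the span of those rows of [[1,1],[0,1]]^{tensor m} of weight >= 2^{m-r}. -/

import Mathlib

open scoped BigOperators

/-- The evaluation point `ρ(j) ∈ F₂^m`. -/
def rho (m : ℕ) (j : Fin (2^m)) : Fin m → ZMod 2 :=
  fun i => if Nat.testBit (j : ℕ) (m - 1 - i.val) then 1 else 0

/-- The evaluation vector of a polynomial over all points of `F₂^m`. -/
noncomputable def evalVec (m : ℕ) (f : MvPolynomial (Fin m) (ZMod 2)) :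
    Fin (2^m) → ZMod 2 :=
  fun j => MvPolynomial.eval (rho m j) f

/-- The Reed-Muller code `RM(r, m)` as a subspace of `F₂^{2^m}`. -/
noncomputable def RM (m r : ℕ) : Submodule (ZMod 2) (Fin (2^m) → ZMod 2) :=
  Submodule.span (ZMod 2)
    {v | ∃ f : MvPolynomial (Fin m) (ZMod 2), f.totalDegree ≤ r ∧ evalVec m f = v}

/-- The base matrix `[[1,1],[0,1]]` over `F₂`. -/
def baseMat : Matrix (Fin 2) (Fin 2) (ZMod 2) := !![1, 1; 0, 1]

/-- The `m`-fold Kronecker power of `[[1,1],[0,1]]`, as a `2^m × 2^m` matrix over `F₂`. -/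
noncomputable def kronPow : (m : ℕ) → Matrix (Fin (2^m)) (Fin (2^m)) (ZMod 2)
  | 0 => 1
  | m + 1 =>
      Matrix.reindex (finProdFinEquiv.trans (finCongr (by rw [pow_succ]; ring)))
        (finProdFinEquiv.trans (finCongr (by rw [pow_succ]; ring)))
        (Matrix.kroneckerMap (· * ·) baseMat (kronPow m))

lemma baseMat_apply (a c : Fin 2) :
    baseMat a c = if a = 1 then (if c = 1 then (1 : ZMod 2) else 0) else 1 := by
  fin_cases a <;> fin_cases c <;> simp [baseMat]

lemma kronPow_apply (m : ℕ) (j k : Fin (2^m)) :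
    kronPow m j k =
      ∏ i : Fin m, (if Nat.testBit j.val i.val then
        (if Nat.testBit k.val i.val then (1 : ZMod 2) else 0) else 1) := by
  induction m with
  | zero =>
    have hj : j = k := by
      ext
      have := j.isLt; have := k.isLt
      simp only [pow_zero] at *
      omega
    subst hj
    simp [kronPow, Matrix.one_apply]
  | succ m ih =>
    have hjm : j.val / 2^m < 2 := Nat.div_lt_of_lt_mul (by simpa [pow_succ] using j.isLt)
    have hkm : k.val / 2^m < 2 := Nat.div_lt_of_lt_mul (by simpa [pow_succ] using k.isLt)
    have h2m : 0 < 2^m := Nat.pow_pos two_pos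
    show Matrix.reindex _ _ _ j k = _
    rw [Matrix.reindex_apply, Matrix.submatrix_apply]
    simp only [Equiv.symm_trans_apply, finCongr_symm, finCongr_apply, finProdFinEquiv_symm_apply]
    rw [Matrix.kroneckerMap_apply, ih, Fin.prod_univ_castSucc, mul_comm]
    have hbit : ∀ x : Fin (2^(m+1)), x.val / 2^m < 2 →
        ((x:ℕ).testBit m = (x.val / 2^m == 1)) := by
      intro x hx
      rw [Nat.testBit_eq_decide_div_mod_eq, Nat.mod_eq_of_lt hx]
      rcases Nat.le_one_iff_eq_zero_or_eq_one.mp (Nat.le_of_lt_succ hx) with h | h <;> simp [h]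
    congr 1
    · apply Finset.prod_congr rfl
      intro i _
      simp only [Fin.coe_modNat, Fin.coe_cast, Nat.testBit_mod_two_pow, Fin.coe_castSucc,
        i.isLt, decide_true, Bool.true_and]
    · have hjd : ((Fin.cast (by rw [pow_succ]; ring : 2^(m+1) = 2 * 2^m) j).divNat : Fin 2)
          = ⟨j.val / 2^m, hjm⟩ := rfl
      have hkd : ((Fin.cast (by rw [pow_succ]; ring : 2^(m+1) = 2 * 2^m) k).divNat : Fin 2)
          = ⟨k.val / 2^m, hkm⟩ := rfl
      rw [hjd, hkd, baseMat_apply]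
      simp only [Fin.val_last, hbit j hjm, hbit k hkm, Fin.ext_iff, Fin.val_one]
      have hj' := Nat.le_one_iff_eq_zero_or_eq_one.mp (Nat.le_of_lt_succ hjm)
      have hk' := Nat.le_one_iff_eq_zero_or_eq_one.mp (Nat.le_of_lt_succ hkm)
      rcases hj' with h | h <;> rcases hk' with h' | h' <;> simp [h, h']

/-- The set of variables attached to row `j`. -/
def bitSet (m : ℕ) (j : Fin (2^m)) : Finset (Fin m) :=
  Finset.univ.filter (fun i => Nat.testBit j.val (m - 1 - i.val))

lemma sub_one_sub_rev (m : ℕ) (i : Fin m) : m - 1 - (Fin.rev i).val = i.val := by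
  have := i.isLt
  simp only [Fin.val_rev]
  omega

lemma rev_val_eq (m : ℕ) (i : Fin m) : (Fin.rev i).val = m - 1 - i.val := by
  have := i.isLt
  simp only [Fin.val_rev]
  omega

lemma kronPow_apply' (m : ℕ) (j k : Fin (2^m)) :
    kronPow m j k =
      ∏ i ∈ bitSet m j, (if Nat.testBit k.val (m - 1 - i.val) then (1 : ZMod 2) else 0) := by
  rw [kronPow_apply, bitSet, Finset.prod_filter]
  rw [← Equiv.prod_comp Fin.revPerm
    (fun i : Fin m => if Nat.testBit j.val (m - 1 - i.val) then
      (if Nat.testBit k.val (m - 1 - i.val) then (1 : ZMod 2) else 0) else 1)]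
  apply Finset.prod_congr rfl
  intro i _
  simp only [Fin.revPerm_apply, sub_one_sub_rev]

lemma kronPow_row_eq_evalVec (m : ℕ) (j : Fin (2^m)) :
    kronPow m j = evalVec m (∏ i ∈ bitSet m j, MvPolynomial.X i) := by
  funext k
  rw [kronPow_apply']
  simp only [evalVec, map_prod, MvPolynomial.eval_X]
  apply Finset.prod_congr rfl
  intro i _
  simp [rho]

lemma kronPow_entry_ne_zero_iff (m : ℕ) (j k : Fin (2^m)) :
    kronPow m j k ≠ 0 ↔ ∀ i ∈ bitSet m j, Nat.testBit k.val (m - 1 - i.val) := by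
  rw [kronPow_apply', Finset.prod_ne_zero_iff]
  constructor
  · intro h i hi
    by_contra hb
    have := h i hi
    simp [hb] at this
  · intro h i hi
    simp [h i hi]

lemma testBit_iff (m : ℕ) (k : Fin (2^m)) (t : Fin m) :
    Nat.testBit k.val t.val ↔ finFunctionFinEquiv.symm k t = 1 := by
  rw [Nat.testBit_eq_decide_div_mod_eq]
  have hv : ((finFunctionFinEquiv.symm k : Fin m → Fin 2) t : ℕ) = k.val / 2^t.val % 2 := by
    simp [finFunctionFinEquiv, Equiv.ofRightInverseOfCardLE_symm_apply]
  constructor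
  · intro h
    ext
    rw [hv]
    exact of_decide_eq_true h
  · intro h
    have h1 : ((finFunctionFinEquiv.symm k : Fin m → Fin 2) t : ℕ) = 1 := by rw [h]; rfl
    rw [hv] at h1
    simp [h1]

/-- counting vectors whose bits contain a given set -/
lemma card_superset (m : ℕ) (S : Finset (Fin m)) :
    (Finset.univ.filter
      (fun k : Fin (2^m) => ∀ i ∈ S, Nat.testBit k.val (m - 1 - i.val))).card
      = 2^(m - S.card) := by
  classical
  have himg : (Finset.univ.filter
      (fun k : Fin (2^m) => ∀ i ∈ S, Nat.testBit k.val (m - 1 - i.val)))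
      = Finset.image finFunctionFinEquiv
        (Finset.univ.filter (fun f : Fin m → Fin 2 => ∀ t : Fin m, Fin.rev t ∈ S → f t = 1)) := by
    ext k
    simp only [Finset.mem_filter, Finset.mem_univ, true_and, Finset.mem_image]
    constructor
    · intro h
      refine ⟨finFunctionFinEquiv.symm k, ?_, by simp⟩
      intro t ht
      have := h (Fin.rev t) ht
      rw [← rev_val_eq, Fin.rev_rev] at this
      exact (testBit_iff m k t).mp this
    · rintro ⟨f, hf, rfl⟩
      intro i hi
      rw [show (m - 1 - i.val) = (Fin.rev i).val from (rev_val_eq m i).symm]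
      rw [testBit_iff]
      simp only [Equiv.symm_apply_apply]
      exact hf (Fin.rev i) (by rwa [Fin.rev_rev])
  rw [himg, Finset.card_image_of_injective _ finFunctionFinEquiv.injective]
  have hpi : (Finset.univ.filter (fun f : Fin m → Fin 2 => ∀ t : Fin m, Fin.rev t ∈ S → f t = 1))
      = Fintype.piFinset (fun t => if Fin.rev t ∈ S then ({1} : Finset (Fin 2)) else Finset.univ) := by
    ext f
    simp only [Finset.mem_filter, Finset.mem_univ, true_and, Fintype.mem_piFinset]
    apply forall_congr'
    intro t
    by_cases ht : Fin.rev t ∈ S <;> simp [ht]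
  rw [hpi, Fintype.card_piFinset]
  have : ∀ t : Fin m, (if Fin.rev t ∈ S then ({1} : Finset (Fin 2)) else Finset.univ).card
      = (fun u => if u ∈ S then 1 else 2) (Fin.rev t) := by
    intro t
    by_cases ht : Fin.rev t ∈ S <;> simp [ht]
  rw [Finset.prod_congr rfl (fun t _ => this t)]
  rw [show (∏ t : Fin m, (fun u => if u ∈ S then 1 else 2) (Fin.rev t))
      = ∏ u : Fin m, (if u ∈ S then 1 else 2) from
    Equiv.prod_comp Fin.revPerm (fun u => if u ∈ S then 1 else 2)]
  rw [Finset.prod_ite]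
  have h1 : (Finset.univ.filter (fun u : Fin m => ¬ u ∈ S)) = Sᶜ := by
    ext u; simp
  simp only [Finset.prod_const, one_pow, h1, one_mul, Finset.card_compl, Fintype.card_fin]

lemma hammingNorm_kronPow (m : ℕ) (j : Fin (2^m)) :
    hammingNorm (kronPow m j) = 2^(m - (bitSet m j).card) := by
  classical
  have : hammingNorm (kronPow m j) = (Finset.univ.filter
      (fun k : Fin (2^m) => ∀ i ∈ bitSet m j, Nat.testBit k.val (m - 1 - i.val))).card := by
    unfold hammingNorm
    congr 1
    ext k
    simp only [Finset.mem_filter, Finset.mem_univ, true_and]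
    exact kronPow_entry_ne_zero_iff m j k
  rw [this, card_superset]

lemma exists_row (m : ℕ) (S : Finset (Fin m)) : ∃ j : Fin (2^m), bitSet m j = S := by
  classical
  refine ⟨finFunctionFinEquiv (fun t => if Fin.rev t ∈ S then 1 else 0), ?_⟩
  ext i
  simp only [bitSet, Finset.mem_filter, Finset.mem_univ, true_and]
  rw [show (m - 1 - i.val) = (Fin.rev i).val from (rev_val_eq m i).symm]
  rw [testBit_iff]
  simp only [Equiv.symm_apply_apply]
  by_cases hi : i ∈ S
  · simp [Fin.rev_rev, hi]
  · simp [Fin.rev_rev, hi]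

theorem RM_eq_span_heavy_rows_of_kronPow (m r : ℕ) :
    RM m r = Submodule.span (ZMod 2)
      {v | ∃ j : Fin (2^m), kronPow m j = v ∧ 2^(m - r) ≤ hammingNorm v} := by
  classical
  apply le_antisymm
  · rw [RM]
    apply Submodule.span_le.mpr
    rintro v ⟨f, hdeg, rfl⟩
    have hsum : evalVec m f = ∑ a ∈ f.support,
        evalVec m (MvPolynomial.monomial a (MvPolynomial.coeff a f)) := by
      funext k
      simp only [evalVec, Finset.sum_apply]
      conv_lhs => rw [MvPolynomial.as_sum f]
      rw [map_sum]
    rw [hsum]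
    apply Submodule.sum_mem
    intro a ha
    rcases (by decide : ∀ c : ZMod 2, c = 0 ∨ c = 1) (MvPolynomial.coeff a f) with hc | hc
    · have h0 : evalVec m ((MvPolynomial.monomial a) (0:ZMod 2)) = 0 := by
        funext k; simp [evalVec]
      rw [hc, h0]
      exact Submodule.zero_mem _
    · rw [hc]
      obtain ⟨j, hj⟩ := exists_row m a.support
      have hEq : evalVec m ((MvPolynomial.monomial a) (1:ZMod 2)) = kronPow m j := by
        rw [kronPow_row_eq_evalVec, hj]
        funext k
        simp only [evalVec, MvPolynomial.eval_monomial, map_prod, MvPolynomial.eval_X, one_mul]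
        rw [Finsupp.prod]
        apply Finset.prod_congr rfl
        intro i hi
        have hne : a i ≠ 0 := Finsupp.mem_support_iff.mp hi
        by_cases hb : Nat.testBit k.val (m - 1 - i.val) <;>
          simp [rho, hb, zero_pow hne]
      rw [hEq]
      apply Submodule.subset_span
      refine ⟨j, rfl, ?_⟩
      rw [hammingNorm_kronPow, hj]
      have hcard : a.support.card ≤ r := by
        have h1 : a.support.card ≤ a.sum fun _ e => e := by
          rw [Finsupp.sum, Finset.card_eq_sum_ones]
          exact Finset.sum_le_sum fun i hi =>
            Nat.one_le_iff_ne_zero.mpr (Finsupp.mem_support_iff.mp hi)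
        exact le_trans (le_trans h1 (MvPolynomial.le_totalDegree ha)) hdeg
      exact Nat.pow_le_pow_right (by norm_num) (Nat.sub_le_sub_left hcard m)
  · apply Submodule.span_le.mpr
    rintro v ⟨j, rfl, hw⟩
    apply Submodule.subset_span
    refine ⟨∏ i ∈ bitSet m j, MvPolynomial.X i, ?_, (kronPow_row_eq_evalVec m j).symm⟩
    have hcard_le_m : (bitSet m j).card ≤ m := by
      simpa using Finset.card_le_univ (bitSet m j)
    rw [hammingNorm_kronPow] at hw
    have h2 : m - r ≤ m - (bitSet m j).card :=
      (Nat.pow_le_pow_iff_right (by norm_num)).mp hw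
    have hcr : (bitSet m j).card ≤ r := by omega
    calc (∏ i ∈ bitSet m j, MvPolynomial.X i).totalDegree
        ≤ ∑ i ∈ bitSet m j, (MvPolynomial.X i : MvPolynomial (Fin m) (ZMod 2)).totalDegree :=
          MvPolynomial.totalDegree_finset_prod _ _
      _ ≤ r := by
          simp only [MvPolynomial.totalDegree_X, Finset.sum_const, smul_eq_mul, mul_one]
          exact hcr
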